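/- For every nonempty family F ⊆ P(X), the family F' = {A ∩ B : A ∈ F, Bᶜ ∉ F} is partition regular on X: for every finite partition X = C₁ ∪ … ∪ C_r, some Cᵢ contains an element of F' as a subset; more precisely any finite partition of a member of F' has a piece containing a member of F'. -/
import Mathlib


/-- Given a family `F` of subsets of `X`, the derived family
`F' = {A ∩ B : A ∈ F, Bᶜ ∉ F}`. -/
def DerivedFamily {X : Type*} (F : Set (Set X)) : Set (Set X) :=
  {D | ∃ A ∈ F, ∃ B : Set X, Bᶜ ∉ F ∧ D = A ∩ B}

lemma derivedFamily_aux {X : Type*} (F : Set (Set X))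
    (hup : ∀ A B : Set X, A ∈ F → A ⊆ B → B ∈ F) :
    ∀ r : ℕ, ∀ D ∈ DerivedFamily F, ∀ C : Fin r → Set X, D = ⋃ i, C i →
      (∀ i j, i ≠ j → C i ∩ C j = ∅) →
      ∃ i, ∃ E ∈ DerivedFamily F, E ⊆ C i := by
  intro r
  induction r with
  | zero =>
    intro D hD C hcover _
    exfalso
    obtain ⟨A, hA, B, hB, hDeq⟩ := hD
    have hempty : D = ∅ := by rw [hcover]; simp
    refine hB (hup A Bᶜ hA fun x hxA hxB => ?_)
    have : x ∈ D := hDeq ▸ ⟨hxA, hxB⟩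
    rw [hempty] at this
    exact this
  | succ r ih =>
    intro D hD C hcover hdisj
    obtain ⟨A, hA, B, hB, hDeq⟩ := hD
    by_cases h : Bᶜ ∪ C (Fin.last r) ∈ F
    · refine ⟨Fin.last r, (Bᶜ ∪ C (Fin.last r)) ∩ B, ⟨_, h, B, hB, rfl⟩, ?_⟩
      rintro x ⟨hx1, hx2⟩
      rcases hx1 with h' | h'
      · exact absurd hx2 h'
      · exact h'
    · set L := C (Fin.last r) with hL
      have hE : A ∩ (B ∩ Lᶜ) ∈ DerivedFamily F :=
        ⟨A, hA, B ∩ Lᶜ, by rwa [Set.compl_inter, compl_compl], rfl⟩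
      set C' : Fin r → Set X := fun i => C i.castSucc ∩ Lᶜ with hC'
      have hcov' : A ∩ (B ∩ Lᶜ) = ⋃ i, C' i := by
        apply Set.Subset.antisymm
        · rintro x ⟨hxA, hxB, hxL⟩
          have hxD : x ∈ D := hDeq ▸ ⟨hxA, hxB⟩
          rw [hcover] at hxD
          obtain ⟨j, hj⟩ := Set.mem_iUnion.mp hxD
          have hjne : j ≠ Fin.last r := by
            rintro rfl; exact hxL hj
          obtain ⟨i, rfl⟩ := Fin.exists_castSucc_eq.mpr hjne
          exact Set.mem_iUnion.mpr ⟨i, hj, hxL⟩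
        · refine Set.iUnion_subset fun i x hx => ?_
          obtain ⟨hxC, hxL⟩ := hx
          have hxD : x ∈ D := by rw [hcover]; exact Set.mem_iUnion.mpr ⟨i.castSucc, hxC⟩
          rw [hDeq] at hxD
          exact ⟨hxD.1, hxD.2, hxL⟩
      have hdisj' : ∀ i j, i ≠ j → C' i ∩ C' j = ∅ := by
        intro i j hij
        apply Set.eq_empty_of_subset_empty
        calc C' i ∩ C' j ⊆ C i.castSucc ∩ C j.castSucc := by
              rintro x ⟨⟨h1, _⟩, ⟨h2, _⟩⟩; exact ⟨h1, h2⟩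
          _ = ∅ := hdisj _ _ (fun hc => hij (Fin.castSucc_injective r hc))
      obtain ⟨i, E, hEF, hEsub⟩ := ih _ hE C' hcov' hdisj'
      exact ⟨i.castSucc, E, hEF, hEsub.trans Set.inter_subset_left⟩

/-- For every nonempty upward-closed family `F ⊆ P(X)`, the family
`F' = {A ∩ B : A ∈ F, Bᶜ ∉ F}` is partition regular: any finite partition of a
member of `F'` has a piece containing a member of `F'`. -/
theorem derivedFamily_partition_regular {X : Type*} (F : Set (Set X))
    (hne : F.Nonempty)
    (hup : ∀ A B : Set X, A ∈ F → A ⊆ B → B ∈ F)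
    (D : Set X) (hD : D ∈ DerivedFamily F)
    (r : ℕ) (C : Fin r → Set X)
    (hcover : D = ⋃ i, C i)
    (hdisj : ∀ i j, i ≠ j → C i ∩ C j = ∅) :
    ∃ i, ∃ E ∈ DerivedFamily F, E ⊆ C i :=
  derivedFamily_aux F hup r D hD C hcover hdisj
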